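/- Let Ω ⊂ ℝ² be a closed cone with vertex at the origin and opening angle π/m for an integer m ≥ 1. Unfolding works: there is a map from broken rays in Ω reflecting on the two boundary rays of the cone to straight lines in ℝ², given by successive reflections across the boundary rays, such that the integral of a function f over the broken ray equals the integral of the symmetrized function f̃ (extended to ℝ² by the 2m reflections/rotations of the dihedral group of order 2m) over the corresponding line. -/

import Mathlib

open MeasureTheory

/-- The closed cone `{r e^{iθ} : r ≥ 0, 0 ≤ θ ≤ π/m}` in the plane (identified with ℂ). -/
noncomputable def coneSet (m : ℕ) : Set ℂ :=
  {z | ∃ r θ : ℝ, 0 ≤ r ∧ 0 ≤ θ ∧ θ ≤ Real.pi / m ∧ z = r * Complex.exp (θ * Complex.I)}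

/-- The unit direction of the `i`-th segment of a polygonal curve with vertices `x`. -/
noncomputable def dirC (x : ℕ → ℂ) (i : ℕ) : ℂ :=
  (‖x (i + 1) - x i‖ : ℂ)⁻¹ * (x (i + 1) - x i)

/-- A broken ray in the cone `coneSet m`, encoded by its vertices `x 0, …, x N`:
segments lie in the cone, interior vertices lie on one of the two boundary rays, and
at each interior vertex the reflection law holds (reflection across the ray `θ = 0`
is `v ↦ conj v`, reflection across the ray `θ = π/m` is `v ↦ e^{2iπ/m} conj v`). -/
noncomputable def IsConeBrokenRay (m N : ℕ) (x : ℕ → ℂ) : Prop :=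
  1 ≤ N ∧ (∀ i < N, x i ≠ x (i + 1)) ∧
  (∀ i < N, ∀ t ∈ Set.Icc (0 : ℝ) 1, x i + (t : ℂ) * (x (i + 1) - x i) ∈ coneSet m) ∧
  ∀ i, i + 2 ≤ N →
    ((∃ r : ℝ, 0 < r ∧ x (i + 1) = (r : ℂ)) ∧
        dirC x (i + 1) = starRingEnd ℂ (dirC x i)) ∨
    ((∃ r : ℝ, 0 < r ∧ x (i + 1) = (r : ℂ) * Complex.exp ((Real.pi / m) * Complex.I)) ∧
        dirC x (i + 1) =
          Complex.exp (2 * (Real.pi / m) * Complex.I) * starRingEnd ℂ (dirC x i))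

/-- The integral of `f` over a polygonal curve with respect to arc length. -/
noncomputable def brtSumC (f : ℂ → ℝ) (N : ℕ) (x : ℕ → ℂ) : ℝ :=
  ∑ i ∈ Finset.range N,
    ‖x (i + 1) - x i‖ * ∫ t in (0 : ℝ)..1, f (x i + (t : ℂ) * (x (i + 1) - x i))

open Classical in
/-- The reflection applied at vertex `x (i+1)`. -/
noncomputable def rhoC (m : ℕ) (x : ℕ → ℂ) (i : ℕ) (z : ℂ) : ℂ :=
  if ((∃ r : ℝ, 0 < r ∧ x (i + 1) = (r : ℂ)) ∧
      dirC x (i + 1) = starRingEnd ℂ (dirC x i))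
  then starRingEnd ℂ z
  else Complex.exp (2 * (Real.pi / m) * Complex.I) * starRingEnd ℂ z

/-- Composition of the reflections at the first `i` interior vertices. -/
noncomputable def GGC (m : ℕ) (x : ℕ → ℂ) : ℕ → ℂ → ℂ
  | 0 => fun z => z
  | (i + 1) => fun z => GGC m x i (rhoC m x i z)

lemma rhoC_affine (m : ℕ) (x : ℕ → ℂ) (i : ℕ) (t : ℝ) (a b : ℂ) :
    rhoC m x i (a + (t : ℂ) * b) = rhoC m x i a + (t : ℂ) * rhoC m x i b := by
  unfold rhoC
  split_ifs <;> simp [map_add, map_mul, Complex.conj_ofReal] <;> ring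

lemma rhoC_smul (m : ℕ) (x : ℕ → ℂ) (i : ℕ) (t : ℝ) (b : ℂ) :
    rhoC m x i ((t : ℂ) * b) = (t : ℂ) * rhoC m x i b := by
  have := rhoC_affine m x i t 0 b
  have h0 : rhoC m x i 0 = 0 := by unfold rhoC; split_ifs <;> simp
  simpa [h0] using this

lemma ftil_rhoC (m : ℕ) (x : ℕ → ℂ) (ftil : ℂ → ℝ)
    (hsym0 : ∀ z : ℂ, ftil (starRingEnd ℂ z) = ftil z)
    (hsym1 : ∀ z : ℂ,
      ftil (Complex.exp (2 * (Real.pi / m) * Complex.I) * starRingEnd ℂ z) = ftil z)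
    (i : ℕ) (z : ℂ) : ftil (rhoC m x i z) = ftil z := by
  unfold rhoC; split_ifs
  · exact hsym0 z
  · exact hsym1 z

lemma ftil_GGC (m : ℕ) (x : ℕ → ℂ) (ftil : ℂ → ℝ)
    (hsym0 : ∀ z : ℂ, ftil (starRingEnd ℂ z) = ftil z)
    (hsym1 : ∀ z : ℂ,
      ftil (Complex.exp (2 * (Real.pi / m) * Complex.I) * starRingEnd ℂ z) = ftil z)
    (i : ℕ) (z : ℂ) : ftil (GGC m x i z) = ftil z := by
  induction i generalizing z with
  | zero => rfl
  | succ i ih =>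
      show ftil (GGC m x i (rhoC m x i z)) = ftil z
      rw [ih, ftil_rhoC m x ftil hsym0 hsym1]

lemma rhoC_fix (m : ℕ) (x : ℕ → ℂ) (i : ℕ)
    (h4i : ((∃ r : ℝ, 0 < r ∧ x (i + 1) = (r : ℂ)) ∧
        dirC x (i + 1) = starRingEnd ℂ (dirC x i)) ∨
      ((∃ r : ℝ, 0 < r ∧ x (i + 1) = (r : ℂ) * Complex.exp ((Real.pi / m) * Complex.I)) ∧
        dirC x (i + 1) =
          Complex.exp (2 * (Real.pi / m) * Complex.I) * starRingEnd ℂ (dirC x i))) :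
    rhoC m x i (x (i + 1)) = x (i + 1) ∧ rhoC m x i (dirC x (i + 1)) = dirC x i := by
  unfold rhoC
  split_ifs with hc
  · obtain ⟨⟨r, _, hr⟩, hd⟩ := hc
    constructor
    · rw [hr, Complex.conj_ofReal]
    · rw [hd]; simp
  · have hc1 := h4i.resolve_left hc
    obtain ⟨⟨r, _, hr⟩, hd⟩ := hc1
    have hw : Complex.exp (2 * (Real.pi / m) * Complex.I) *
        starRingEnd ℂ (Complex.exp ((Real.pi / m) * Complex.I)) =
        Complex.exp ((Real.pi / m) * Complex.I) := by
      rw [← Complex.exp_conj, ← Complex.exp_add]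
      congr 1
      simp [map_mul, Complex.conj_ofReal, Complex.conj_I]
      ring
    have hww : Complex.exp (2 * (Real.pi / m) * Complex.I) *
        starRingEnd ℂ (Complex.exp (2 * (Real.pi / m) * Complex.I)) = 1 := by
      rw [← Complex.exp_conj, ← Complex.exp_add]
      have : starRingEnd ℂ (2 * ((Real.pi : ℂ) / m) * Complex.I)
          = -(2 * ((Real.pi : ℂ) / m) * Complex.I) := by
        simp [map_mul, map_div₀, Complex.conj_ofReal, Complex.conj_I, map_ofNat,
          Complex.conj_natCast]
      rw [this, add_neg_cancel, Complex.exp_zero]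
    constructor
    · rw [hr, map_mul, Complex.conj_ofReal]
      calc Complex.exp (2 * (Real.pi / m) * Complex.I) *
            ((r : ℂ) * starRingEnd ℂ (Complex.exp ((Real.pi / m) * Complex.I)))
          = (r : ℂ) * (Complex.exp (2 * (Real.pi / m) * Complex.I) *
              starRingEnd ℂ (Complex.exp ((Real.pi / m) * Complex.I))) := by ring
        _ = _ := by rw [hw]
    · rw [hd, map_mul]
      calc Complex.exp (2 * (Real.pi / m) * Complex.I) *
            (starRingEnd ℂ (Complex.exp (2 * (Real.pi / m) * Complex.I)) *
              starRingEnd ℂ (starRingEnd ℂ (dirC x i)))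
          = (Complex.exp (2 * (Real.pi / m) * Complex.I) *
            starRingEnd ℂ (Complex.exp (2 * (Real.pi / m) * Complex.I))) *
              (dirC x i) := by rw [Complex.conj_conj]; ring
        _ = dirC x i := by rw [hww, one_mul]

lemma starC (m N : ℕ) (x : ℕ → ℂ) (h2 : ∀ i < N, x i ≠ x (i + 1))
    (h4 : ∀ i, i + 2 ≤ N →
      ((∃ r : ℝ, 0 < r ∧ x (i + 1) = (r : ℂ)) ∧
          dirC x (i + 1) = starRingEnd ℂ (dirC x i)) ∨
      ((∃ r : ℝ, 0 < r ∧ x (i + 1) = (r : ℂ) * Complex.exp ((Real.pi / m) * Complex.I)) ∧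
          dirC x (i + 1) =
            Complex.exp (2 * (Real.pi / m) * Complex.I) * starRingEnd ℂ (dirC x i))) :
    ∀ i < N, ∀ t : ℝ,
      GGC m x i (x i + (t : ℂ) * (x (i + 1) - x i)) =
        x 0 + ((((∑ j ∈ Finset.range i, ‖x (j + 1) - x j‖) +
          t * ‖x (i + 1) - x i‖ : ℝ)) : ℂ) * dirC x 0 := by
  intro i
  induction i with
  | zero =>
      intro _ t
      have hne : x 1 - x 0 ≠ 0 := sub_ne_zero.mpr (h2 0 (by omega)).symm
      have h0 : (‖x 1 - x 0‖ : ℂ) ≠ 0 := by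
        simpa using norm_ne_zero_iff.mpr hne
      have habs : ((‖x 1 - x 0‖ : ℝ) : ℂ) ≠ 0 := by
        exact h0
      show x 0 + (t : ℂ) * (x 1 - x 0) = _
      rw [dirC]
      push_cast
      rw [Finset.sum_range_zero]
      field_simp [habs]
      ring
  | succ i ih =>
      intro hiN t
      simp only [show i + 1 + 1 = i + 2 from rfl]
      have hiN' : i < N := by omega
      have ih' := ih hiN'
      have h4i := h4 i (by omega)
      have hfix := rhoC_fix m x i h4i
      have hnei : x i ≠ x (i + 1) := h2 i hiN'
      have hli : (‖x (i + 1) - x i‖ : ℂ) ≠ 0 := by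
        simpa using norm_ne_zero_iff.mpr (sub_ne_zero.mpr hnei.symm)
      have hlir : ‖x (i + 1) - x i‖ ≠ 0 :=
        norm_ne_zero_iff.mpr (sub_ne_zero.mpr hnei.symm)
      -- unfold one step
      show GGC m x i (rhoC m x i (x (i + 1) + (t : ℂ) * (x (i + 2) - x (i + 1)))) = _
      rw [rhoC_affine, hfix.1]
      -- rewrite the difference via the direction
      have hdiff : x (i + 2) - x (i + 1)
          = ((‖x (i + 2) - x (i + 1)‖ : ℝ) : ℂ) * dirC x (i + 1) := by
        have h2' : (‖x (i + 2) - x (i + 1)‖ : ℂ) ≠ 0 := by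
          simpa using norm_ne_zero_iff.mpr (sub_ne_zero.mpr (h2 (i + 1) hiN).symm)
        rw [dirC]
        simp only [show i + 1 + 1 = i + 2 from rfl]
        rw [← mul_assoc, mul_inv_cancel₀ h2', one_mul]
      conv_lhs => rw [hdiff]
      rw [rhoC_smul, hfix.2]
      -- express dirC x i in terms of x (i+1) - x i and fold into the IH
      have harg : x (i + 1) + (t : ℂ) * (((‖x (i + 2) - x (i + 1)‖ : ℝ) : ℂ) * dirC x i)
          = x i + (((1 + t * ‖x (i + 2) - x (i + 1)‖ / ‖x (i + 1) - x i‖ : ℝ)) : ℂ) *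
              (x (i + 1) - x i) := by
        rw [dirC]
        push_cast
        field_simp
        ring
      rw [harg, ih' (1 + t * ‖x (i + 2) - x (i + 1)‖ / ‖x (i + 1) - x i‖)]
      have hsum : (∑ j ∈ Finset.range i, ‖x (j + 1) - x j‖) +
          (1 + t * ‖x (i + 2) - x (i + 1)‖ / ‖x (i + 1) - x i‖) * ‖x (i + 1) - x i‖
          = (∑ j ∈ Finset.range (i + 1), ‖x (j + 1) - x j‖) + t * ‖x (i + 2) - x (i + 1)‖ := by
        have habs : ‖x (i + 1) - x i‖ ≠ 0 := by
          exact hlir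
        rw [Finset.sum_range_succ]
        field_simp [habs]
        ring
      rw [hsum]


/-- unfolding of broken rays in a cone of opening angle `π/m`: for every
broken ray in the cone there is a straight line (here: a unit-speed line segment of the
same total length) such that the integral of `f` over the broken ray equals the integral
over that segment of the symmetrization `f̃` of `f` under the dihedral group of order
`2m` generated by the reflections across the two boundary rays. -/
theorem stmt9 (m : ℕ) (hm : 1 ≤ m) (f ftil : ℂ → ℝ)
    (hf : Continuous f) (hfc : HasCompactSupport f) (hft : Continuous ftil)
    (hext : ∀ z ∈ coneSet m, ftil z = f z)
    (hsym0 : ∀ z : ℂ, ftil (starRingEnd ℂ z) = ftil z)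
    (hsym1 : ∀ z : ℂ,
      ftil (Complex.exp (2 * (Real.pi / m) * Complex.I) * starRingEnd ℂ z) = ftil z)
    (N : ℕ) (x : ℕ → ℂ) (h : IsConeBrokenRay m N x) :
    ∃ p v : ℂ, ‖v‖ = 1 ∧
      brtSumC f N x =
        ∫ t in (0 : ℝ)..(∑ i ∈ Finset.range N, ‖x (i + 1) - x i‖),
          ftil (p + (t : ℂ) * v) := by
  obtain ⟨hN, h2, h3, h4⟩ := h
  have hne0 : x 1 - x 0 ≠ 0 := sub_ne_zero.mpr (h2 0 hN).symm
  refine ⟨x 0, dirC x 0, ?_, ?_⟩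
  · have habs : ‖x 1 - x 0‖ ≠ 0 := by
      exact norm_ne_zero_iff.mpr hne0
    rw [dirC, norm_mul, norm_inv]
    simp only [Complex.norm_real, norm_norm]
    exact inv_mul_cancel₀ habs
  · have hcont : Continuous fun t : ℝ => ftil (x 0 + (t : ℂ) * dirC x 0) := by
      apply hft.comp
      continuity
    have key : ∀ i < N,
        ‖x (i + 1) - x i‖ * ∫ t in (0:ℝ)..1, f (x i + (t : ℂ) * (x (i + 1) - x i)) =
        ∫ t in (∑ j ∈ Finset.range i, ‖x (j + 1) - x j‖)..(∑ j ∈ Finset.range (i + 1),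
          ‖x (j + 1) - x j‖), ftil (x 0 + (t : ℂ) * dirC x 0) := by
      intro i hi
      have hl : ‖x (i + 1) - x i‖ ≠ 0 :=
        norm_ne_zero_iff.mpr (sub_ne_zero.mpr (h2 i hi).symm)
      have hEq : Set.EqOn (fun t : ℝ => f (x i + (t : ℂ) * (x (i + 1) - x i)))
          (fun t : ℝ => (fun u : ℝ => ftil (x 0 + (u : ℂ) * dirC x 0))
            (‖x (i + 1) - x i‖ * t + ∑ j ∈ Finset.range i, ‖x (j + 1) - x j‖))
          (Set.uIcc 0 1) := by
        intro t ht
        rw [Set.uIcc_of_le (by norm_num : (0:ℝ) ≤ 1)] at ht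
        show f (x i + (t : ℂ) * (x (i + 1) - x i)) = _
        rw [← hext _ (h3 i hi t ht), ← ftil_GGC m x ftil hsym0 hsym1 i,
          starC m N x h2 h4 i hi t]
        congr 2
        push_cast
        ring
      have hcomp := intervalIntegral.integral_comp_mul_add (a := 0) (b := 1)
        (fun u : ℝ => ftil (x 0 + (u : ℂ) * dirC x 0)) hl
        (∑ j ∈ Finset.range i, ‖x (j + 1) - x j‖)
      rw [intervalIntegral.integral_congr hEq, hcomp]
      rw [Finset.sum_range_succ]
      simp only [mul_zero, zero_add, mul_one, smul_eq_mul]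
      rw [← mul_assoc, mul_inv_cancel₀ hl, one_mul, add_comm]
    have hint : ∀ k, k < N → IntervalIntegrable
        (fun t : ℝ => ftil (x 0 + (t : ℂ) * dirC x 0)) volume
        ((fun n => ∑ j ∈ Finset.range n, ‖x (j + 1) - x j‖) k)
        ((fun n => ∑ j ∈ Finset.range n, ‖x (j + 1) - x j‖) (k + 1)) :=
      fun k _ => hcont.intervalIntegrable _ _
    have hsum := intervalIntegral.sum_integral_adjacent_intervals (μ := volume) hint
    simp only [Finset.sum_range_zero] at hsum
    rw [brtSumC, Finset.sum_congr rfl (fun i hi => key i (Finset.mem_range.mp hi)), hsum]
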